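/- arXiv:1501.01493 — 2 statements merged into one kernel-verified Lean document; each statement's English description precedes it below -/
import Mathlib

section
/- If V: ℝ → ℝ is three times differentiable with V''' ≥ 0 (convex first derivative), then Q(s) = s²V''(yⁿ+s) − 2sV'(yⁿ+s) + 2V(yⁿ+s) − 2V(yⁿ) satisfies Q'(s) = s²V'''(yⁿ+s) ≥ 0, Q(0) = 0, and hence s³·Q(s) has constant sign structure making F''(s) = ξ·Q(s)/s³ ≥ 0 for all s ≠ 0; i.e., F is convex on each of (−∞,0) and (0,∞). -/
/-- For V three times continuously differentiable with V''' ≥ 0, the function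
Q(s) = s²V''(yⁿ+s) − 2sV'(yⁿ+s) + 2V(yⁿ+s) − 2V(yⁿ) satisfies
Q'(s) = s²V'''(yⁿ+s) ≥ 0, Q(0) = 0, and F''(s) = ξQ(s)/s³ ≥ 0 for s ≠ 0;
i.e. F is convex on each of (−∞,0) and (0,∞). -/
theorem stmt4 (V : ℝ → ℝ) (hV : ContDiff ℝ 3 V)
    (hV3 : ∀ x : ℝ, 0 ≤ iteratedDeriv 3 V x)
    (yn qn ξ : ℝ) (hξ : 0 ≤ ξ)
    (Q : ℝ → ℝ)
    (hQ : ∀ s : ℝ, Q s = s ^ 2 * iteratedDeriv 2 V (yn + s)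
      - 2 * s * deriv V (yn + s) + 2 * V (yn + s) - 2 * V yn) :
    (∀ s : ℝ, deriv Q s = s ^ 2 * iteratedDeriv 3 V (yn + s) ∧ 0 ≤ deriv Q s) ∧
    Q 0 = 0 ∧
    (∀ s : ℝ, s ≠ 0 → 0 ≤ ξ * Q s / s ^ 3) ∧
    ConvexOn ℝ (Set.Iio (0 : ℝ))
      (fun s : ℝ => ξ * (V (yn + s) - V yn) / s + s - 2 * qn) ∧
    ConvexOn ℝ (Set.Ioi (0 : ℝ))
      (fun s : ℝ => ξ * (V (yn + s) - V yn) / s + s - 2 * qn) := by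
  -- Basic differentiability facts
  have h1 := contDiff_succ_iff_deriv.mp (show ContDiff ℝ (2+1) V by exact_mod_cast hV)
  have h2 := contDiff_succ_iff_deriv.mp
    (show ContDiff ℝ (1+1) (deriv V) by exact_mod_cast h1.2.2)
  have hd0 : Differentiable ℝ V := h1.1
  have hd1 : Differentiable ℝ (deriv V) := h2.1
  have hV2eq : iteratedDeriv 2 V = deriv (deriv V) := by
    rw [iteratedDeriv_succ, iteratedDeriv_one]
  have hV3eq : iteratedDeriv 3 V = deriv (iteratedDeriv 2 V) := by
    rw [iteratedDeriv_succ]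
  have hd2 : Differentiable ℝ (iteratedDeriv 2 V) := by
    rw [hV2eq]; exact h2.2.2.differentiable one_ne_zero
  -- translated HasDerivAt facts
  have htr : ∀ s : ℝ, HasDerivAt (fun t : ℝ => yn + t) 1 s :=
    fun s => (hasDerivAt_id s).const_add yn
  have hVs : ∀ s : ℝ, HasDerivAt (fun t => V (yn + t)) (deriv V (yn + s)) s := fun s => by
    have h := (hd0 (yn + s)).hasDerivAt.comp s (htr s); rw [mul_one] at h; exact h
  have hV1s : ∀ s : ℝ, HasDerivAt (fun t => deriv V (yn + t)) (iteratedDeriv 2 V (yn + s)) s :=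
    fun s => by
      rw [hV2eq]
      have h := (hd1 (yn + s)).hasDerivAt.comp s (htr s); rw [mul_one] at h; exact h
  have hV2s : ∀ s : ℝ,
      HasDerivAt (fun t => iteratedDeriv 2 V (yn + t)) (iteratedDeriv 3 V (yn + s)) s :=
    fun s => by
      rw [hV3eq]
      have h := (hd2 (yn + s)).hasDerivAt.comp s (htr s); rw [mul_one] at h; exact h
  -- derivative of Q
  have hQfun : Q = fun s : ℝ => s ^ 2 * iteratedDeriv 2 V (yn + s)
      - 2 * s * deriv V (yn + s) + 2 * V (yn + s) - 2 * V yn := funext hQ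
  have hQ' : ∀ s : ℝ, HasDerivAt Q (s ^ 2 * iteratedDeriv 3 V (yn + s)) s := by
    intro s
    rw [hQfun]
    have h : HasDerivAt (fun s : ℝ => s ^ 2 * iteratedDeriv 2 V (yn + s)
        - 2 * s * deriv V (yn + s) + 2 * V (yn + s) - 2 * V yn)
        ((2 * s ^ 1 * iteratedDeriv 2 V (yn + s) + s ^ 2 * iteratedDeriv 3 V (yn + s))
          - ((2 * 1) * deriv V (yn + s) + 2 * s * iteratedDeriv 2 V (yn + s))
          + 2 * deriv V (yn + s)) s := by
      exact ((((hasDerivAt_pow 2 s).mul (hV2s s)).sub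
        ((((hasDerivAt_id s).const_mul 2).mul (hV1s s)))).add
        ((hVs s).const_mul 2)).sub_const (2 * V yn)
    convert h using 1
    ring
  have hQderiv : ∀ s : ℝ, deriv Q s = s ^ 2 * iteratedDeriv 3 V (yn + s) :=
    fun s => (hQ' s).deriv
  have hQnonneg : ∀ s : ℝ, 0 ≤ deriv Q s := fun s => by
    rw [hQderiv s]
    exact mul_nonneg (sq_nonneg s) (hV3 _)
  have hQ0 : Q 0 = 0 := by simp [hQ 0]
  have hQmono : Monotone Q :=
    monotone_of_deriv_nonneg (fun s => (hQ' s).differentiableAt) hQnonneg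
  -- sign of ξ Q s / s³
  have hsign : ∀ s : ℝ, s ≠ 0 → 0 ≤ ξ * Q s / s ^ 3 := by
    intro s hs
    rcases lt_or_gt_of_ne hs with hneg | hpos
    · have hQs : Q s ≤ 0 := hQ0 ▸ hQmono hneg.le
      have hs3 : s ^ 3 ≤ 0 := by
        have := odd_two_mul_add_one 1
        nlinarith [sq_nonneg s]
      exact div_nonneg_of_nonpos (mul_nonpos_of_nonneg_of_nonpos hξ hQs) hs3
    · have hQs : 0 ≤ Q s := hQ0 ▸ hQmono hpos.le
      exact div_nonneg (mul_nonneg hξ hQs) (by positivity)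
  -- first derivative of F
  set F : ℝ → ℝ := fun s : ℝ => ξ * (V (yn + s) - V yn) / s + s - 2 * qn with hF
  set F1 : ℝ → ℝ := fun s : ℝ =>
    (ξ * deriv V (yn + s) * s - ξ * (V (yn + s) - V yn)) / s ^ 2 + 1 with hF1def
  have hFd : ∀ s : ℝ, s ≠ 0 → HasDerivAt F (F1 s) s := by
    intro s hs
    have hN : HasDerivAt (fun t : ℝ => ξ * (V (yn + t) - V yn)) (ξ * deriv V (yn + s)) s :=
      ((hVs s).sub_const (V yn)).const_mul ξ
    have hdiv : HasDerivAt (fun t : ℝ => ξ * (V (yn + t) - V yn) / t)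
        ((ξ * deriv V (yn + s) * s - ξ * (V (yn + s) - V yn) * 1) / s ^ 2) s :=
      hN.div (hasDerivAt_id s) hs
    have h := (hdiv.add (hasDerivAt_id s)).sub_const (2 * qn)
    refine h.congr_deriv ?_
    simp [hF1def]
  -- second derivative of F
  have hF1d : ∀ s : ℝ, s ≠ 0 → HasDerivAt F1 (ξ * Q s / s ^ 3) s := by
    intro s hs
    have hM : HasDerivAt (fun t : ℝ => ξ * deriv V (yn + t) * t - ξ * (V (yn + t) - V yn))
        ((ξ * iteratedDeriv 2 V (yn + s) * s + ξ * deriv V (yn + s) * 1)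
          - ξ * deriv V (yn + s)) s :=
      ((((hV1s s).const_mul ξ).mul (hasDerivAt_id s)).sub
        (((hVs s).sub_const (V yn)).const_mul ξ))
    have hden : HasDerivAt (fun t : ℝ => t ^ 2) (2 * s ^ 1) s := hasDerivAt_pow 2 s
    have h := (hM.div hden (pow_ne_zero 2 hs)).add_const 1
    refine h.congr_deriv ?_
    rw [hQ s]
    field_simp
    ring
  refine ⟨fun s => ⟨hQderiv s, hQnonneg s⟩, hQ0, hsign, ?_, ?_⟩
  · -- convex on Iio 0
    refine convexOn_of_deriv2_nonneg' (convex_Iio 0) ?_ ?_ ?_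
    · exact fun x hx => ((hFd x (ne_of_lt hx)).differentiableAt).differentiableWithinAt
    · intro x hx
      have hev : deriv F =ᶠ[nhds x] F1 :=
        Filter.eventuallyEq_of_mem (Iio_mem_nhds hx) (fun y hy => (hFd y (ne_of_lt hy)).deriv)
      exact (((hF1d x (ne_of_lt hx)).congr_of_eventuallyEq hev).differentiableAt).differentiableWithinAt
    · intro x hx
      have hev : deriv F =ᶠ[nhds x] F1 :=
        Filter.eventuallyEq_of_mem (Iio_mem_nhds hx) (fun y hy => (hFd y (ne_of_lt hy)).deriv)
      have : deriv (deriv F) x = ξ * Q x / x ^ 3 :=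
        ((hF1d x (ne_of_lt hx)).congr_of_eventuallyEq hev).deriv
      calc (0:ℝ) ≤ ξ * Q x / x ^ 3 := hsign x (ne_of_lt hx)
        _ = deriv (deriv F) x := this.symm
        _ = deriv^[2] F x := by simp [Function.iterate_succ, Function.iterate_one]
  · -- convex on Ioi 0
    refine convexOn_of_deriv2_nonneg' (convex_Ioi 0) ?_ ?_ ?_
    · exact fun x hx => ((hFd x (ne_of_gt hx)).differentiableAt).differentiableWithinAt
    · intro x hx
      have hev : deriv F =ᶠ[nhds x] F1 :=
        Filter.eventuallyEq_of_mem (Ioi_mem_nhds hx) (fun y hy => (hFd y (ne_of_gt hy)).deriv)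
      exact (((hF1d x (ne_of_gt hx)).congr_of_eventuallyEq hev).differentiableAt).differentiableWithinAt
    · intro x hx
      have hev : deriv F =ᶠ[nhds x] F1 :=
        Filter.eventuallyEq_of_mem (Ioi_mem_nhds hx) (fun y hy => (hFd y (ne_of_gt hy)).deriv)
      have : deriv (deriv F) x = ξ * Q x / x ^ 3 :=
        ((hF1d x (ne_of_gt hx)).congr_of_eventuallyEq hev).deriv
      calc (0:ℝ) ≤ ξ * Q x / x ^ 3 := hsign x (ne_of_gt hx)
        _ = deriv (deriv F) x := this.symm
        _ = deriv^[2] F x := by simp [Function.iterate_succ, Function.iterate_one]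
end

section
/- The componentwise nonlinear map F(s) = (I + D)s + 2(Dyⁿ − qⁿ) + ζ·G(s), where G(s)_i = (V̂(y_i^n + s_i) − V̂(y_i^n))/s_i (extended continuously to V̂'(y_i^n) at s_i = 0) with V̂ convex differentiable and ζ ≥ 0, and D symmetric positive definite, has at most one zero in ℝ^N. -/
open Matrix

lemma slope_fun_mono (Vh : ℝ → ℝ) (hVc : ConvexOn ℝ Set.univ Vh)
    (hVd : ContDiff ℝ 1 Vh) (y : ℝ) :
    Monotone (fun x : ℝ => if x = 0 then deriv Vh y
      else (Vh (y + x) - Vh y) / x) := by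
  have hdiff : Differentiable ℝ Vh := hVd.differentiable one_ne_zero
  have hs : ∀ x : ℝ, x ≠ 0 → (Vh (y + x) - Vh y) / x = slope Vh y (y + x) := by
    intro x hx
    rw [slope_def_field]
    field_simp
    rw [add_sub_cancel_left, mul_div_cancel_left₀ _ hx]
  intro a b hab
  rcases eq_or_lt_of_le hab with rfl | hlt
  · exact le_rfl
  by_cases ha : a = 0
  · subst ha
    have hb : b ≠ 0 := by positivity
    simp only [if_pos rfl, if_neg hb]
    rw [hs b hb]
    exact hVc.deriv_le_slope (Set.mem_univ y) (Set.mem_univ (y + b))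
      (by linarith) (hdiff y)
  by_cases hb : b = 0
  · subst hb
    simp only [if_pos rfl, if_neg ha]
    rw [hs a ha, slope_comm]
    exact hVc.slope_le_deriv (Set.mem_univ (y + a)) (Set.mem_univ y)
      (by linarith) (hdiff y)
  · simp only [if_neg ha, if_neg hb]
    rw [hs a ha, hs b hb]
    have hmono := hVc.slope_mono (Set.mem_univ y)
    exact hmono ⟨Set.mem_univ _, by simpa using ha⟩
      ⟨Set.mem_univ _, by simpa using hb⟩ (by linarith)

/-- Uniqueness of the root of the distributed nonlinear system
F(s) = (I + D)s + 2(Dyⁿ − qⁿ) + ζG(s), with D symmetric positive definite,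
ζ ≥ 0 and V̂ convex continuously differentiable. -/
theorem stmt17 (N : ℕ) (hN : 1 ≤ N) (D : Matrix (Fin N) (Fin N) ℝ)
    (hD : D.PosDef) (ζ : ℝ) (hζ : 0 ≤ ζ) (Vh : ℝ → ℝ)
    (hVc : ConvexOn ℝ Set.univ Vh) (hVd : ContDiff ℝ 1 Vh)
    (yn qn : Fin N → ℝ)
    (G : (Fin N → ℝ) → (Fin N → ℝ))
    (hG : ∀ s i, G s i = if s i = 0 then deriv Vh (yn i)
      else (Vh (yn i + s i) - Vh (yn i)) / s i)
    (F : (Fin N → ℝ) → (Fin N → ℝ))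
    (hF : ∀ s, F s = (1 + D).mulVec s + (2 : ℝ) • (D.mulVec yn - qn) + ζ • G s) :
    ∀ s t : Fin N → ℝ, F s = 0 → F t = 0 → s = t := by
  intro s t hs ht
  by_contra hne
  have hu : s - t ≠ 0 := sub_ne_zero.mpr hne
  have hpos : (1 + D).PosDef := Matrix.PosDef.posSemidef_add Matrix.PosSemidef.one hD
  -- componentwise monotonicity of G
  have hGmono : ∀ i, 0 ≤ (s i - t i) * (G s i - G t i) := by
    intro i
    rcases le_total (t i) (s i) with h | h
    · have := slope_fun_mono Vh hVc hVd (yn i) h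
      simp only [← hG s i, ← hG t i] at this
      -- careful: the `if` in slope_fun_mono uses the value directly
      have h1 : G t i ≤ G s i := by
        rw [hG s i, hG t i]; exact slope_fun_mono Vh hVc hVd (yn i) h
      nlinarith
    · have h1 : G s i ≤ G t i := by
        rw [hG s i, hG t i]; exact slope_fun_mono Vh hVc hVd (yn i) h
      nlinarith
  -- equation: (1+D) *ᵥ (s - t) = -(ζ • (G s - G t))
  have heq : (1 + D).mulVec (s - t) = -(ζ • (G s - G t)) := by
    have h1 := hF s; have h2 := hF t
    rw [hs] at h1; rw [ht] at h2
    have h4 : ((1 + D).mulVec s + (2 : ℝ) • (D.mulVec yn - qn) + ζ • G s)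
        - ((1 + D).mulVec t + (2 : ℝ) • (D.mulVec yn - qn) + ζ • G t) = 0 := by
      rw [← h1, ← h2, sub_self]
    rw [Matrix.mulVec_sub, smul_sub]
    linear_combination (norm := abel1) h4
  have hdot : 0 < (s - t) ⬝ᵥ ((1 + D).mulVec (s - t)) := by
    have := hpos.dotProduct_mulVec_pos hu
    simpa using this
  rw [heq] at hdot
  have : (s - t) ⬝ᵥ (-(ζ • (G s - G t))) ≤ 0 := by
    rw [dotProduct_neg, neg_nonpos, dotProduct_smul]
    apply mul_nonneg hζ
    apply Finset.sum_nonneg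
    intro i _
    have := hGmono i
    simpa [Pi.sub_apply, mul_comm] using this
  linarith
end
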